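/- Let m ≥ 2 and let τ be a symmetric trilinear form on the standard Euclidean space ℝ^m that satisfies the superconformal identity. Let e be a unit vector at which the function x ↦ τ(x,x,x) attains its maximum over the unit sphere S^{m−1} ⊂ ℝ^m, and set t = τ(e,e,e). Then t > 0, τ(e,e,v) = 0 for every vector v orthogonal to e, and τ(e,v,w) = ((t − √(t²+4))/2)·⟨v,w⟩ for all vectors v, w orthogonal to e. -/

import Mathlib

set_option maxHeartbeats 1000000

open scoped BigOperators RealInnerProductSpace

/-- A trilinear form is symmetric if it is invariant under all permutations of its
arguments (generated by the two adjacent transpositions). -/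
def TrilinearIsSymm (m : ℕ)
    (τ : EuclideanSpace ℝ (Fin m) →ₗ[ℝ] EuclideanSpace ℝ (Fin m) →ₗ[ℝ]
          EuclideanSpace ℝ (Fin m) →ₗ[ℝ] ℝ) : Prop :=
  (∀ x y z, τ x y z = τ y x z) ∧ (∀ x y z, τ x y z = τ x z y)

/-- The superconformal identity for a trilinear form on Euclidean `ℝ^m`, expressed using
the standard orthonormal basis `(eᵣ)`:
`∑ᵣ (τ(eᵣ,p,s)τ(eᵣ,q,t) − τ(eᵣ,p,t)τ(eᵣ,q,s)) = −(⟨p,s⟩⟨q,t⟩ − ⟨p,t⟩⟨q,s⟩)`. -/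
def TrilinearIsSuperconformal (m : ℕ)
    (τ : EuclideanSpace ℝ (Fin m) →ₗ[ℝ] EuclideanSpace ℝ (Fin m) →ₗ[ℝ]
          EuclideanSpace ℝ (Fin m) →ₗ[ℝ] ℝ) : Prop :=
  ∀ p q s t : EuclideanSpace ℝ (Fin m),
    ∑ r : Fin m,
      (τ (EuclideanSpace.single r 1) p s * τ (EuclideanSpace.single r 1) q t
        - τ (EuclideanSpace.single r 1) p t * τ (EuclideanSpace.single r 1) q s)
      = -(⟪p, s⟫ * ⟪q, t⟫ - ⟪p, t⟫ * ⟪q, s⟫)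

private lemma sum_single_smul {m : ℕ} (x : EuclideanSpace ℝ (Fin m)) :
    ∑ r, x r • EuclideanSpace.single r (1:ℝ) = x := by
  have := (EuclideanSpace.basisFun (Fin m) ℝ).toBasis.sum_repr x
  simpa [EuclideanSpace.basisFun_apply, EuclideanSpace.basisFun_repr] using this

private lemma inner_eq_sum {m : ℕ} (x y : EuclideanSpace ℝ (Fin m)) :
    ⟪x, y⟫ = ∑ i, x i * y i := by
  simp [PiLp.inner_apply, RCLike.inner_apply, conj_trivial]
  exact Finset.sum_congr rfl fun i _ => mul_comm _ _

private lemma helper_le (X Y Z : ℝ) (h : ∀ ε : ℝ, 0 < ε → ε ≤ 1/2 → X ≤ Y + Z * ε) :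
    X ≤ Y := by
  by_contra hc
  push_neg at hc
  rcases le_or_gt Z 0 with hZ | hZ
  · have := h (1/2) (by norm_num) le_rfl
    nlinarith
  · have hε : 0 < min (1/2) ((X - Y)/(2*Z)) :=
      lt_min (by norm_num) (div_pos (by linarith) (by linarith))
    have := h _ hε (min_le_left _ _)
    have h2 : Z * min (1/2) ((X - Y)/(2*Z)) ≤ Z * ((X - Y)/(2*Z)) :=
      mul_le_mul_of_nonneg_left (min_le_right _ _) hZ.le
    have : X ≤ Y + (X - Y)/2 := by
      have hz : Z * ((X - Y)/(2*Z)) = (X - Y)/2 := by field_simp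
      nlinarith
    linarith

section aux
variable {m : ℕ} (τ : EuclideanSpace ℝ (Fin m) →ₗ[ℝ] EuclideanSpace ℝ (Fin m) →ₗ[ℝ]
          EuclideanSpace ℝ (Fin m) →ₗ[ℝ] ℝ)

private lemma expand1 (x a b : EuclideanSpace ℝ (Fin m)) :
    τ x a b = ∑ r, x r * τ (EuclideanSpace.single r 1) a b := by
  conv_lhs => rw [← sum_single_smul x]
  simp [map_sum, LinearMap.sum_apply]

private lemma cube_expand (h1 : ∀ x y z, τ x y z = τ y x z) (h2 : ∀ x y z, τ x y z = τ x z y)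
    (x y : EuclideanSpace ℝ (Fin m)) :
    τ (x+y) (x+y) (x+y) = τ x x x + 3 * τ x x y + 3 * τ x y y + τ y y y := by
  have e1 : τ x y x = τ x x y := h2 x y x
  have e2 : τ y x x = τ x x y := by rw [h1 y x x, e1]
  have e3 : τ y x y = τ x y y := h1 y x y
  have e4 : τ y y x = τ x y y := by rw [h2 y y x, h1 y x y]
  simp only [map_add, LinearMap.add_apply]
  rw [e1, e2, e3, e4]; ring

/-- The vector `F_e(v)` whose `r`-th coordinate is `τ(eᵣ, e, v)`. -/
private noncomputable def Fop (e v : EuclideanSpace ℝ (Fin m)) : EuclideanSpace ℝ (Fin m) :=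
  (WithLp.equiv 2 (Fin m → ℝ)).symm (fun r => τ (EuclideanSpace.single r 1) e v)

private lemma Fop_apply (e v : EuclideanSpace ℝ (Fin m)) (r : Fin m) :
    Fop τ e v r = τ (EuclideanSpace.single r 1) e v := rfl

private lemma Fop_inner (e v x : EuclideanSpace ℝ (Fin m)) :
    ⟪Fop τ e v, x⟫ = τ x e v := by
  rw [inner_eq_sum, expand1 τ x e v]
  refine Finset.sum_congr rfl fun r _ => ?_
  rw [Fop_apply]; ring

end aux

/-- if `τ` is a symmetric trilinear form on `ℝ^m` satisfying the
superconformal identity, and the cubic `x ↦ τ(x,x,x)` attains its maximum over the unit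
sphere at a unit vector `e`, then with `t = τ(e,e,e)` one has `t > 0`, `τ(e,e,v) = 0`
for `v ⊥ e`, and `τ(e,v,w) = ((t − √(t²+4))/2)⟨v,w⟩` for `v, w ⊥ e`. -/
theorem superconformal_taylor_coefficients_at_max (m : ℕ) (hm : 2 ≤ m)
    (τ : EuclideanSpace ℝ (Fin m) →ₗ[ℝ] EuclideanSpace ℝ (Fin m) →ₗ[ℝ]
          EuclideanSpace ℝ (Fin m) →ₗ[ℝ] ℝ)
    (hsymm : TrilinearIsSymm m τ) (hsc : TrilinearIsSuperconformal m τ)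
    (e : EuclideanSpace ℝ (Fin m)) (he : ‖e‖ = 1)
    (hmax : ∀ x : EuclideanSpace ℝ (Fin m), ‖x‖ = 1 → τ x x x ≤ τ e e e) :
    0 < τ e e e ∧
    (∀ v : EuclideanSpace ℝ (Fin m), ⟪e, v⟫ = 0 → τ e e v = 0) ∧
    (∀ v w : EuclideanSpace ℝ (Fin m), ⟪e, v⟫ = 0 → ⟪e, w⟫ = 0 →
      τ e v w = ((τ e e e - Real.sqrt ((τ e e e) ^ 2 + 4)) / 2) * ⟪v, w⟫) := by
  obtain ⟨hs1, hs2⟩ := hsymm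
  have hee : ⟪e, e⟫ = (1:ℝ) := by
    rw [real_inner_self_eq_norm_sq, he]; norm_num
  -- T ≥ 0
  have hT0 : (0:ℝ) ≤ τ e e e := by
    have hn : ‖(-e : EuclideanSpace ℝ (Fin m))‖ = 1 := by simpa using he
    have h := hmax (-e) hn
    have hne : τ (-e) (-e) (-e) = -(τ e e e) := by simp [map_neg]
    rw [hne] at h; linarith
  -- the basic sphere inequality
  have sphere_ineq : ∀ v : EuclideanSpace ℝ (Fin m), ⟪e, v⟫ = 0 → ‖v‖ = 1 →
      ∀ α β : ℝ, α^2 + β^2 = 1 →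
      α^3 * τ e e e + 3*α^2*β * τ e e v + 3*α*β^2 * τ e v v + β^3 * τ v v v ≤ τ e e e := by
    intro v hv hv1 α β hαβ
    have hvv : ⟪v, v⟫ = (1:ℝ) := by rw [real_inner_self_eq_norm_sq, hv1]; norm_num
    have hxnorm : ‖(α • e + β • v : EuclideanSpace ℝ (Fin m))‖ = 1 := by
      have hin : ⟪(α • e + β • v : EuclideanSpace ℝ (Fin m)), α • e + β • v⟫ = 1 := by
        rw [real_inner_add_add_self]
        simp only [real_inner_smul_left, real_inner_smul_right]
        rw [hee, hvv, hv]
        linear_combination hαβ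
      have h2 : ‖(α • e + β • v : EuclideanSpace ℝ (Fin m))‖^2 = 1 := by
        rw [← real_inner_self_eq_norm_sq]; exact hin
      calc ‖(α • e + β • v : EuclideanSpace ℝ (Fin m))‖
          = Real.sqrt (‖(α • e + β • v : EuclideanSpace ℝ (Fin m))‖^2) :=
            (Real.sqrt_sq (norm_nonneg _)).symm
        _ = 1 := by rw [h2, Real.sqrt_one]
    have h := hmax _ hxnorm
    rw [cube_expand τ hs1 hs2 (α • e) (β • v)] at h
    simp only [map_smul, LinearMap.smul_apply, smul_eq_mul] at h
    ring_nf at h ⊢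
    linarith
  -- properties of α = √(1-β²) for 0 < β ≤ 1/2
  have alpha_facts : ∀ β : ℝ, 0 < β → β ≤ 1/2 →
      ∃ α : ℝ, α^2 + β^2 = 1 ∧ 0 ≤ α ∧ α ≤ 1 ∧ 1 - β^2 ≤ α ∧
        1 - (3/2)*β^2 - β^4 ≤ α^3 := by
    intro β hβ hβ2
    have hb1 : β^2 ≤ 1/4 := by nlinarith
    have h1m : (0:ℝ) ≤ 1 - β^2 := by nlinarith
    have hα2 : (Real.sqrt (1-β^2))^2 = 1 - β^2 := Real.sq_sqrt h1m
    have hα0 : 0 ≤ Real.sqrt (1-β^2) := Real.sqrt_nonneg _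
    have hαle1 : Real.sqrt (1-β^2) ≤ 1 := by
      nlinarith [sq_nonneg (Real.sqrt (1-β^2) - 1), sq_nonneg β]
    have hge : 1 - β^2 ≤ Real.sqrt (1-β^2) := by
      have h := Real.sqrt_le_sqrt (show (1-β^2)^2 ≤ 1-β^2 by nlinarith)
      rwa [Real.sqrt_sq h1m] at h
    have hc0 : (0:ℝ) ≤ 1 - β^2/2 - β^4 := by nlinarith
    have hlb : 1 - β^2/2 - β^4 ≤ Real.sqrt (1-β^2) := by
      have hkey : (1 - β^2/2 - β^4)^2 ≤ 1-β^2 := by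
        nlinarith [mul_le_mul_of_nonneg_left
          (show β^2 + β^4 ≤ 7/4 by nlinarith [sq_nonneg (β^2)])
          (show (0:ℝ) ≤ β^4 by positivity), sq_nonneg (β^2), sq_nonneg (β^3)]
      have h := Real.sqrt_le_sqrt hkey
      rwa [Real.sqrt_sq hc0] at h
    refine ⟨Real.sqrt (1-β^2), by rw [hα2]; ring, hα0, hαle1, hge, ?_⟩
    have hcube : (Real.sqrt (1-β^2))^3 = Real.sqrt (1-β^2) * (1-β^2) := by
      rw [show (3:ℕ) = 1 + 2 from rfl, pow_add, pow_one, hα2]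
    rw [hcube]
    nlinarith [mul_le_mul_of_nonneg_right hlb h1m, sq_nonneg (β^2), sq_nonneg (β^3)]
  -- first variation: τ(e,e,v) ≤ 0 for unit v ⊥ e
  have firstvar_le : ∀ v : EuclideanSpace ℝ (Fin m), ⟪e, v⟫ = 0 → ‖v‖ = 1 →
      τ e e v ≤ 0 := by
    intro v hv hv1
    have key : ∀ β : ℝ, 0 < β → β ≤ 1/2 →
        (9/4) * τ e e v ≤ 0 + (2*(τ e e e) + 3*|τ e v v| + |τ v v v|) * β := by
      intro β hβ hβ2
      obtain ⟨α, hαβ, hα0, hα1, hαge, hα3⟩ := alpha_facts β hβ hβ2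
      have hsi := sphere_ineq v hv hv1 α β hαβ
      have hβ1 : β ≤ 1 := by linarith
      have hb1 : β^2 ≤ 1/4 := by nlinarith
      have h1 : τ e e e - α^3 * τ e e e ≤ ((3/2)*β^2 + β^4) * τ e e e := by
        linarith [mul_nonneg (sub_nonneg.2 hα3) hT0]
      have habs_b : 0 ≤ τ e v v + |τ e v v| := by linarith [neg_abs_le (τ e v v)]
      have habs_c : 0 ≤ τ v v v + |τ v v v| := by linarith [neg_abs_le (τ v v v)]
      have h2 : -(3*α*β^2* τ e v v) ≤ 3*β^2*|τ e v v| := by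
        linarith [mul_nonneg (mul_nonneg hα0 (sq_nonneg β)) habs_b,
          mul_nonneg (mul_nonneg (sub_nonneg.2 hα1) (sq_nonneg β)) (abs_nonneg (τ e v v))]
      have h3 : -(β^3 * τ v v v) ≤ β^3 * |τ v v v| := by
        linarith [mul_nonneg (show (0:ℝ) ≤ β^3 by positivity) habs_c]
      have hb4 : β^4 ≤ (1/2)*β^2 := by
        nlinarith [mul_nonneg (show (0:ℝ) ≤ 1/4 - β^2 by linarith) (sq_nonneg β)]
      have hb3 : β^3 ≤ β^2 := by
        nlinarith [mul_nonneg (show (0:ℝ) ≤ 1 - β by linarith) (sq_nonneg β)]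
      have hcomb : 3*α^2*β * τ e e v ≤ (2*(τ e e e) + 3*|τ e v v| + |τ v v v|) * β^2 := by
        linarith [hsi, h1, h2, h3,
          mul_nonneg (sub_nonneg.2 hb3) (abs_nonneg (τ v v v)),
          mul_nonneg (sub_nonneg.2 hb4) hT0]
      have hα234 : (3:ℝ)/4 ≤ α^2 := by nlinarith
      rcases le_or_gt (τ e e v) 0 with ha | ha
      · have hK : (0:ℝ) ≤ 2*(τ e e e) + 3*|τ e v v| + |τ v v v| := by positivity
        linarith [mul_nonneg hK hβ.le]
      · have h9 : (9/4) * τ e e v * β ≤ 3*α^2*β * τ e e v := by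
          nlinarith [mul_nonneg (sub_nonneg.2 hα234) (mul_pos ha hβ).le]
        have hfin : ((9/4) * τ e e v) * β ≤ ((2*(τ e e e) + 3*|τ e v v| + |τ v v v|) * β) * β := by
          calc ((9/4) * τ e e v) * β = (9/4) * τ e e v * β := by ring
            _ ≤ 3*α^2*β * τ e e v := h9
            _ ≤ (2*(τ e e e) + 3*|τ e v v| + |τ v v v|) * β^2 := hcomb
            _ = ((2*(τ e e e) + 3*|τ e v v| + |τ v v v|) * β) * β := by ring
        have := le_of_mul_le_mul_right hfin hβ
        linarith
    have := helper_le _ _ _ key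
    linarith
  -- first variation, full form
  have firstvar : ∀ v : EuclideanSpace ℝ (Fin m), ⟪e, v⟫ = 0 → τ e e v = 0 := by
    intro v hv
    rcases eq_or_ne v 0 with rfl | hv0
    · simp
    · have hnv : ‖v‖ ≠ 0 := norm_ne_zero_iff.2 hv0
      have hu1 : ‖(‖v‖⁻¹ • v : EuclideanSpace ℝ (Fin m))‖ = 1 := norm_smul_inv_norm hv0
      have huperp : ⟪e, (‖v‖⁻¹ • v : EuclideanSpace ℝ (Fin m))⟫ = 0 := by
        rw [real_inner_smul_right, hv]; ring
      have hmu : ⟪e, (-(‖v‖⁻¹ • v) : EuclideanSpace ℝ (Fin m))⟫ = (0:ℝ) := by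
        rw [inner_neg_right, huperp]; ring
      have hmu1 : ‖(-(‖v‖⁻¹ • v) : EuclideanSpace ℝ (Fin m))‖ = 1 := by simpa using hu1
      have h1 := firstvar_le _ huperp hu1
      have h2 := firstvar_le _ hmu hmu1
      have h2' : -(τ e e (‖v‖⁻¹ • v)) ≤ 0 := by simpa [map_neg] using h2
      have hu0 : τ e e (‖v‖⁻¹ • v : EuclideanSpace ℝ (Fin m)) = 0 :=
        le_antisymm h1 (by linarith)
      have hscale : τ e e v = ‖v‖ * τ e e (‖v‖⁻¹ • v : EuclideanSpace ℝ (Fin m)) := by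
        rw [map_smul, smul_eq_mul]
        field_simp
      rw [hscale, hu0]; ring
  -- second variation
  have secvar : ∀ w : EuclideanSpace ℝ (Fin m), ⟪e, w⟫ = 0 →
      τ e w w ≤ (τ e e e)/2 * ⟪w, w⟫ := by
    have secvar_unit : ∀ v : EuclideanSpace ℝ (Fin m), ⟪e, v⟫ = 0 → ‖v‖ = 1 →
        τ e v v ≤ (τ e e e)/2 := by
      intro v hv hv1
      rcases le_or_gt (τ e v v) 0 with hb | hb
      · linarith
      · have key : ∀ β : ℝ, 0 < β → β ≤ 1/2 →
            3 * τ e v v ≤ (3/2) * τ e e e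
              + ((τ e e e) + |τ v v v| + 3 * τ e v v) * β := by
          intro β hβ hβ2
          obtain ⟨α, hαβ, hα0, hα1, hαge, hα3⟩ := alpha_facts β hβ hβ2
          have hsi := sphere_ineq v hv hv1 α β hαβ
          rw [firstvar v hv] at hsi
          have hβ1 : β ≤ 1 := by linarith
          have hb1 : β^2 ≤ 1/4 := by nlinarith
          have h1 : τ e e e - α^3 * τ e e e ≤ ((3/2)*β^2 + β^4) * τ e e e := by
            linarith [mul_nonneg (sub_nonneg.2 hα3) hT0]
          have habs_c : 0 ≤ τ v v v + |τ v v v| := by linarith [neg_abs_le (τ v v v)]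
          have h3 : -(β^3 * τ v v v) ≤ β^3 * |τ v v v| := by
            linarith [mul_nonneg (show (0:ℝ) ≤ β^3 by positivity) habs_c]
          have h4 : 3*(1-β^2)*β^2 * τ e v v ≤ 3*α*β^2* τ e v v := by
            nlinarith [mul_nonneg (sub_nonneg.2 hαge) (mul_pos (mul_pos hβ hβ) hb).le]
          have hb4 : β^4 ≤ β^3 := by
            nlinarith [mul_nonneg (show (0:ℝ) ≤ 1 - β by linarith)
              (show (0:ℝ) ≤ β^3 by positivity)]
          have hcomb : (3 * τ e v v) * β^2 ≤
              ((3/2) * τ e e e + ((τ e e e) + |τ v v v| + 3 * τ e v v) * β) * β^2 := by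
            linarith [hsi, h1, h3, h4,
              mul_nonneg (sub_nonneg.2 hb4) hT0,
              mul_nonneg (sub_nonneg.2 hb4) hb.le]
          exact le_of_mul_le_mul_right hcomb (by positivity)
        have := helper_le _ _ _ key
        linarith
    intro w hw
    rcases eq_or_ne w 0 with rfl | hw0
    · simp
    · have hnw : ‖w‖ ≠ 0 := norm_ne_zero_iff.2 hw0
      have hu1 : ‖(‖w‖⁻¹ • w : EuclideanSpace ℝ (Fin m))‖ = 1 := norm_smul_inv_norm hw0
      have huperp : ⟪e, (‖w‖⁻¹ • w : EuclideanSpace ℝ (Fin m))⟫ = 0 := by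
        rw [real_inner_smul_right, hw]; ring
      have h := secvar_unit _ huperp hu1
      have hexp : τ e (‖w‖⁻¹ • w) (‖w‖⁻¹ • w) = ‖w‖⁻¹ * (‖w‖⁻¹ * τ e w w) := by
        simp only [map_smul, LinearMap.smul_apply, smul_eq_mul]
      rw [hexp] at h
      have hww : ⟪w, w⟫ = ‖w‖^2 := real_inner_self_eq_norm_sq w
      rw [hww]
      have hnpos : 0 < ‖w‖ := lt_of_le_of_ne (norm_nonneg w) (Ne.symm hnw)
      have := mul_le_mul_of_nonneg_left h (le_of_lt (mul_pos hnpos hnpos))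
      calc τ e w w = (‖w‖ * ‖w‖) * (‖w‖⁻¹ * (‖w‖⁻¹ * τ e w w)) := by
            field_simp
        _ ≤ (‖w‖ * ‖w‖) * ((τ e e e)/2) := this
        _ = (τ e e e)/2 * ‖w‖^2 := by ring
  -- τ e e x = T ⟨e,x⟩ for all x
  have L1 : ∀ x : EuclideanSpace ℝ (Fin m), τ e e x = τ e e e * ⟪e, x⟫ := by
    intro x
    have hperp : ⟪e, x - ⟪e, x⟫ • e⟫ = (0:ℝ) := by
      rw [inner_sub_right, real_inner_smul_right, hee]; ring
    have h0 := firstvar _ hperp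
    have hx : τ e e x = τ e e (x - ⟪e,x⟫ • e) + ⟪e,x⟫ * τ e e e := by
      simp only [map_sub, map_smul, smul_eq_mul]; ring
    rw [hx, h0]; ring
  have Tsingle : ∀ r : Fin m, τ (EuclideanSpace.single r 1) e e = τ e e e * e r := by
    intro r
    have h : τ (EuclideanSpace.single r 1) e e = τ e e (EuclideanSpace.single r 1) := by
      rw [hs1 (EuclideanSpace.single r 1) e e, hs2 e (EuclideanSpace.single r 1) e]
    rw [h, L1]
    congr 1
    simp [EuclideanSpace.inner_single_right]
  -- superconformal relation in operator form
  have hstar : ∀ a b : EuclideanSpace ℝ (Fin m), ⟪e, b⟫ = 0 →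
      ⟪Fop τ e a, Fop τ e b⟫ = τ e e e * τ e a b + ⟪a, b⟫ := by
    intro a b hb
    have h := hsc e a e b
    have hsum : ∑ r : Fin m,
        (τ (EuclideanSpace.single r 1) e e * τ (EuclideanSpace.single r 1) a b
          - τ (EuclideanSpace.single r 1) e b * τ (EuclideanSpace.single r 1) a e)
        = τ e e e * τ e a b - ⟪Fop τ e b, Fop τ e a⟫ := by
      rw [Finset.sum_sub_distrib]
      congr 1
      · rw [expand1 τ e a b, Finset.mul_sum]
        refine Finset.sum_congr rfl fun r _ => ?_
        rw [Tsingle r]; ring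
      · rw [inner_eq_sum]
        refine Finset.sum_congr rfl fun r _ => ?_
        rw [Fop_apply, Fop_apply, hs2 (EuclideanSpace.single r 1) a e]
    rw [hsum, hee, hb] at h
    have hab : ⟪Fop τ e a, Fop τ e b⟫ = ⟪Fop τ e b, Fop τ e a⟫ := real_inner_comm _ _
    rw [hab]; linarith [h]
  -- symmetry relation for Fop
  have hFsym : ∀ a b : EuclideanSpace ℝ (Fin m), ⟪Fop τ e a, b⟫ = τ e a b := by
    intro a b
    rw [Fop_inner, hs1 b e a, hs2 e b a]
  -- Main third coefficient result
  have h3 : ∀ v w : EuclideanSpace ℝ (Fin m), ⟪e, v⟫ = 0 → ⟪e, w⟫ = 0 →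
      τ e v w = ((τ e e e - Real.sqrt ((τ e e e) ^ 2 + 4)) / 2) * ⟪v, w⟫ := by
    intro v w' hv hw'
    set s : ℝ := Real.sqrt ((τ e e e)^2 + 4) with hsdef
    have hsq : s^2 = (τ e e e)^2 + 4 := Real.sq_sqrt (by positivity)
    have hspos : 0 < s := Real.sqrt_pos.2 (by positivity)
    set lam : ℝ := (τ e e e - s)/2 with hlam
    have hA : ⟪Fop τ e v, Fop τ e v⟫ = τ e e e * τ e v v + ⟪v, v⟫ := hstar v v hv
    have hB : τ e v (Fop τ e v) = τ e e e * τ e v v + ⟪v, v⟫ := by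
      rw [← hFsym v (Fop τ e v)]; exact hA
    have hC : ⟪Fop τ e v, v⟫ = τ e v v := hFsym v v
    have hD : τ e (Fop τ e v) (Fop τ e v)
        = τ e e e * (τ e e e * τ e v v + ⟪v, v⟫) + τ e v v := by
      have h4 := hstar (Fop τ e v) v hv
      rw [hFsym (Fop τ e v) (Fop τ e v)] at h4
      rw [hs2 e (Fop τ e v) v, hB, hC] at h4
      exact h4
    set W : EuclideanSpace ℝ (Fin m) := Fop τ e v - lam • v with hW
    have hWperp : ⟪e, W⟫ = 0 := by
      rw [hW, inner_sub_right, real_inner_smul_right, hv,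
        ← real_inner_comm e (Fop τ e v), hFsym v e, hs2 e v e, firstvar v hv]
      ring
    have hWW : ⟪W, W⟫ = (τ e e e * τ e v v + ⟪v,v⟫) - 2*lam*(τ e v v) + lam^2 * ⟪v,v⟫ := by
      rw [hW, real_inner_sub_sub_self]
      simp only [real_inner_smul_left, real_inner_smul_right]
      rw [hA, hC]
      ring
    have hτW : τ e W W = (τ e e e * (τ e e e * τ e v v + ⟪v,v⟫) + τ e v v)
        - 2*lam*(τ e e e * τ e v v + ⟪v,v⟫) + lam^2 * τ e v v := by
      rw [hW]
      simp only [map_sub, map_smul, LinearMap.sub_apply, LinearMap.smul_apply, smul_eq_mul]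
      rw [hs2 e (Fop τ e v) v, hD, hB]
      ring
    have hkey : τ e W W = ((τ e e e + s)/2) * ⟪W, W⟫ := by
      rw [hτW, hWW, hlam]
      linear_combination ((-(τ e v v))/4 + ⟪v,v⟫*(τ e e e)/8 - (⟪v,v⟫/8)*s) * hsq
    have hnn : (0:ℝ) ≤ ⟪W, W⟫ := real_inner_self_nonneg
    have hWW0 : ⟪W, W⟫ = (0:ℝ) := by
      have hs2' := secvar W hWperp
      rw [hkey] at hs2'
      have hle : ⟪W, W⟫ ≤ 0 := by nlinarith [mul_nonneg hspos.le hnn]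
      exact le_antisymm hle hnn
    have hW0 : W = 0 := (inner_self_eq_zero (𝕜 := ℝ) (x := W)).1 hWW0
    have hFv : Fop τ e v = lam • v := by
      rw [hW] at hW0
      exact sub_eq_zero.1 hW0
    rw [← hFsym v w', hFv, real_inner_smul_left]
  -- positivity of T
  have hTpos : 0 < τ e e e := by
    have hexu : ∃ v : EuclideanSpace ℝ (Fin m), ⟪e, v⟫ = 0 ∧ ‖v‖ = 1 := by
      have hne : e ≠ 0 := fun h => by simp [h] at he
      have hKne : (ℝ ∙ e)ᗮ ≠ ⊥ := by
        intro hbot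
        have htop : (ℝ ∙ e) = ⊤ := (Submodule.orthogonal_eq_bot_iff (K := ℝ ∙ e)).1 hbot
        have h1 : Module.finrank ℝ (ℝ ∙ e : Submodule ℝ (EuclideanSpace ℝ (Fin m))) = 1 :=
          finrank_span_singleton hne
        have h2 : Module.finrank ℝ (EuclideanSpace ℝ (Fin m)) = m :=
          finrank_euclideanSpace_fin
        rw [htop, finrank_top, h2] at h1
        omega
      obtain ⟨v0, hv0mem, hv0ne⟩ := (Submodule.ne_bot_iff _).1 hKne
      have hperp : ⟪e, v0⟫ = 0 :=
        (Submodule.mem_orthogonal _ _).1 hv0mem e (Submodule.mem_span_singleton_self e)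
      refine ⟨‖v0‖⁻¹ • v0, ?_, norm_smul_inv_norm hv0ne⟩
      rw [real_inner_smul_right, hperp]; ring
    obtain ⟨v, hv, hv1⟩ := hexu
    rcases lt_or_eq_of_le hT0 with h | h
    · exact h
    exfalso
    have hT : τ e e e = 0 := h.symm
    have hvv : ⟪v, v⟫ = (1:ℝ) := by rw [real_inner_self_eq_norm_sq, hv1]; norm_num
    have hsqrt4 : Real.sqrt ((τ e e e)^2 + 4) = 2 := by
      rw [hT, show (0:ℝ)^2 + 4 = 2^2 by norm_num]
      exact Real.sqrt_sq (by norm_num)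
    have hevv : τ e v v = -1 := by
      have hh := h3 v v hv hv
      rw [hsqrt4, hT, hvv] at hh
      rw [hh]; norm_num
    have hcube0 : ∀ x : EuclideanSpace ℝ (Fin m), ‖x‖ = 1 → τ x x x = 0 := by
      intro x hx
      have h1 := hmax x hx
      have hnx : ‖(-x : EuclideanSpace ℝ (Fin m))‖ = 1 := by simpa using hx
      have h2 := hmax (-x) hnx
      have h2' : -(τ x x x) ≤ τ e e e := by simpa [map_neg] using h2
      rw [hT] at h1 h2'
      linarith
    have hev2 : ⟪(e + v : EuclideanSpace ℝ (Fin m)), e + v⟫ = (2:ℝ) := by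
      rw [real_inner_add_add_self, hee, hvv, hv]; norm_num
    have hnev : ‖(e + v : EuclideanSpace ℝ (Fin m))‖ = Real.sqrt 2 := by
      rw [show ‖(e + v : EuclideanSpace ℝ (Fin m))‖
          = Real.sqrt (‖(e + v : EuclideanSpace ℝ (Fin m))‖^2) from
          (Real.sqrt_sq (norm_nonneg _)).symm]
      rw [← real_inner_self_eq_norm_sq, hev2]
    have hs2pos : (0:ℝ) < Real.sqrt 2 := Real.sqrt_pos.2 (by norm_num)
    have hxu : ‖((Real.sqrt 2)⁻¹ • (e + v) : EuclideanSpace ℝ (Fin m))‖ = 1 := by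
      rw [norm_smul, hnev, Real.norm_eq_abs, abs_of_pos (by positivity)]
      field_simp
    have hcx := hcube0 _ hxu
    have hexp : τ ((Real.sqrt 2)⁻¹ • (e + v)) ((Real.sqrt 2)⁻¹ • (e + v))
        ((Real.sqrt 2)⁻¹ • (e + v)) = ((Real.sqrt 2)⁻¹)^3 * τ (e+v) (e+v) (e+v) := by
      simp only [map_smul, LinearMap.smul_apply, smul_eq_mul]; ring
    have hcev : τ (e+v) (e+v) (e+v) = -3 := by
      rw [cube_expand τ hs1 hs2 e v, firstvar v hv, hevv, hcube0 v hv1, hT]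
      ring
    rw [hexp, hcev] at hcx
    have hppos : (0:ℝ) < ((Real.sqrt 2)⁻¹)^3 := by positivity
    nlinarith [hcx, hppos]
  exact ⟨hTpos, firstvar, h3⟩
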